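/- For $x > 0$, the function $g(x) = x \cdot \operatorname{arth}(1/\sqrt{1+x^2})$ satisfies $g(x) < 1$, where $\operatorname{arth}(t) = \frac{1}{2}\log\frac{1+t}{1-t}$ for $0 \leq t < 1$. -/

import Mathlib

/-- The inverse hyperbolic tangent, `arth t = (1/2) log ((1+t)/(1-t))`. -/
noncomputable def arth (t : ℝ) : ℝ := Real.log ((1 + t) / (1 - t)) / 2

theorem stmt_3 (x : ℝ) (hx : 0 < x) :
    x * arth (1 / Real.sqrt (1 + x ^ 2)) < 1 := by
  set s := Real.sqrt (1 + x ^ 2) with hs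
  have hx2 : (0:ℝ) < 1 + x ^ 2 := by positivity
  have hs0 : 0 < s := Real.sqrt_pos.mpr hx2
  have hssq : s ^ 2 = 1 + x ^ 2 := Real.sq_sqrt hx2.le
  have hs1 : 1 < s := by
    nlinarith [hssq]
  -- arth (1/s) = arsinh (1/x)
  have key : arth (1 / s) = Real.arsinh (1 / x) := by
    have h1 : (1 + 1 / s) / (1 - 1 / s) = (s + 1) / (s - 1) := by
      have hd : 0 < 1 - 1 / s := by
        rw [sub_pos, div_lt_one hs0]; exact hs1
      rw [div_eq_div_iff hd.ne' (sub_ne_zero.mpr hs1.ne')]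
      field_simp
    have h2 : (s + 1) / (s - 1) = ((s + 1) / x) ^ 2 := by
      rw [div_pow]
      rw [div_eq_div_iff (by linarith) (by positivity)]
      nlinarith [hssq]
    have h3 : Real.sqrt (1 + (1 / x) ^ 2) = s / x := by
      rw [hs, ← Real.sqrt_sq hx.le, ← Real.sqrt_div' _ (by positivity)]
      congr 1
      field_simp
      rw [Real.sq_sqrt (sq_nonneg x)]; ring
    unfold arth Real.arsinh
    have h4 : (1:ℝ) / x + s / x = (s + 1) / x := by ring
    rw [h1, h2, h3, Real.log_pow, h4]
    push_cast
    ring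
  rw [key]
  have h4 : Real.arsinh (1 / x) < 1 / x := by
    have := (Real.self_lt_sinh_iff (x := Real.arsinh (1 / x))).mpr
      (Real.arsinh_pos_iff.mpr (by positivity))
    rwa [Real.sinh_arsinh] at this
  calc x * Real.arsinh (1 / x) < x * (1 / x) := by
        exact mul_lt_mul_of_pos_left h4 hx
    _ = 1 := by field_simp
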